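/- arXiv:1705.06037 — 2 statements merged into one kernel-verified Lean document; each statement's English description precedes it below -/
import Mathlib

section
/- If H1 and H2 are simple finite hypergraphs, then their maximal-rank-preserving direct product H1×̂H2 is a simple hypergraph. -/
/-!
Basic definitions: finite hypergraphs (a finite nonempty vertex set `V`, given by
`[Fintype V] [Nonempty V]`, together with a set of nonempty edges), walks, distance,
connectedness, simplicity, rank, colorings, Helly property, covers,
the various hypergraph products, 2-sections, and graph products.
-/

/-- A hypergraph on a vertex type `V`: a collection of nonempty edges (finite subsets of `V`). -/
structure FinHypergraph (V : Type*) where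
  edges : Set (Finset V)
  nonempty_edges : ∀ e ∈ edges, e.Nonempty

namespace FinHypergraph

variable {V V₁ V₂ : Type*}

/-- There is a walk of length `n` from `u` to `v`: a sequence of vertices `w 0, …, w n`
and edges `f 1, …, f n` with consecutive vertices distinct and both contained
in the corresponding edge. -/
def HasWalk (H : FinHypergraph V) (u v : V) (n : ℕ) : Prop :=
  ∃ (w : Fin (n + 1) → V) (f : Fin n → Finset V),
    w 0 = u ∧ w (Fin.last n) = v ∧
      ∀ i : Fin n, f i ∈ H.edges ∧ w i.castSucc ≠ w i.succ ∧
        w i.castSucc ∈ f i ∧ w i.succ ∈ f i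

/-- The distance between two vertices: the minimum length of a walk joining them,
`⊤ = ∞` if there is none. -/
noncomputable def dist (H : FinHypergraph V) (u v : V) : ℕ∞ :=
  sInf {x : ℕ∞ | ∃ n : ℕ, x = n ∧ H.HasWalk u v n}

/-- A hypergraph is connected if any two vertices are joined by a walk. -/
def Connected (H : FinHypergraph V) : Prop := ∀ u v : V, ∃ n, H.HasWalk u v n

/-- A hypergraph is simple if every edge has at least two vertices and
no edge is contained in another edge. -/
def Simple (H : FinHypergraph V) : Prop :=
  (∀ e ∈ H.edges, 2 ≤ e.card) ∧ ∀ e ∈ H.edges, ∀ f ∈ H.edges, e ⊆ f → e = f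

/-- A hypergraph is loopless if every edge has at least two vertices. -/
def Loopless (H : FinHypergraph V) : Prop := ∀ e ∈ H.edges, 2 ≤ e.card

/-- The rank: the maximum cardinality of an edge. -/
noncomputable def rank (H : FinHypergraph V) : ℕ := sSup (Finset.card '' H.edges)

/-- The anti-rank: the minimum cardinality of an edge. -/
noncomputable def antirank (H : FinHypergraph V) : ℕ := sInf (Finset.card '' H.edges)

/-- A proper coloring: no color class contains an edge. -/
def IsProperColoring (H : FinHypergraph V) {k : ℕ} (c : V → Fin k) : Prop :=
  ∀ e ∈ H.edges, ∀ i : Fin k, ¬ ∀ v ∈ e, c v = i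

/-- A proper strong coloring: a proper coloring in which the vertices of every
edge receive pairwise distinct colors. -/
def IsStrongColoring (H : FinHypergraph V) {k : ℕ} (c : V → Fin k) : Prop :=
  H.IsProperColoring c ∧ ∀ e ∈ H.edges, ∀ u ∈ e, ∀ v ∈ e, u ≠ v → c u ≠ c v

/-- The chromatic number: the least `k` admitting a proper `k`-coloring. -/
noncomputable def chromaticNumber (H : FinHypergraph V) : ℕ :=
  sInf {k : ℕ | ∃ c : V → Fin k, H.IsProperColoring c}

/-- The strong chromatic number: the least `k` admitting a proper strong `k`-coloring. -/
noncomputable def strongChromaticNumber (H : FinHypergraph V) : ℕ :=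
  sInf {k : ℕ | ∃ c : V → Fin k, H.IsStrongColoring c}

/-- The Helly property: every intersecting family of edges is a star. -/
def Helly (H : FinHypergraph V) : Prop :=
  ∀ E' ⊆ H.edges, (∀ e ∈ E', ∀ f ∈ E', ∃ x, x ∈ e ∧ x ∈ f) → ∃ v, ∀ e ∈ E', v ∈ e

/-- The covering number: the minimum cardinality of a set of vertices meeting every edge. -/
noncomputable def coverNumber (H : FinHypergraph V) : ℕ :=
  sInf {k : ℕ | ∃ T : Finset V, T.card = k ∧ ∀ e ∈ H.edges, ∃ v ∈ T, v ∈ e}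

/-- The Cartesian product of hypergraphs. -/
def cartProd (H₁ : FinHypergraph V₁) (H₂ : FinHypergraph V₂) : FinHypergraph (V₁ × V₂) where
  edges := {E | (∃ x, ∃ f ∈ H₂.edges, E = {x} ×ˢ f) ∨ ∃ e ∈ H₁.edges, ∃ y, E = e ×ˢ {y}}
  nonempty_edges := by
    rintro E (⟨x, f, hf, rfl⟩ | ⟨e, he, y, rfl⟩)
    · exact (Finset.singleton_nonempty x).product (H₂.nonempty_edges f hf)
    · exact (H₁.nonempty_edges e he).product (Finset.singleton_nonempty y)

section Products

variable [DecidableEq V₁] [DecidableEq V₂]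

/-- The minimal-rank-preserving direct product `H₁ ×̌ H₂`. -/
def minDirProd (H₁ : FinHypergraph V₁) (H₂ : FinHypergraph V₂) : FinHypergraph (V₁ × V₂) where
  edges := {E | ∃ e₁ ∈ H₁.edges, ∃ e₂ ∈ H₂.edges,
    E ⊆ e₁ ×ˢ e₂ ∧ E.card = min e₁.card e₂.card ∧
      (E.image Prod.fst).card = min e₁.card e₂.card ∧
      (E.image Prod.snd).card = min e₁.card e₂.card}
  nonempty_edges := by
    rintro E ⟨e₁, h₁, e₂, h₂, -, hc, -, -⟩
    rw [← Finset.card_pos, hc]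
    exact lt_min (Finset.card_pos.mpr (H₁.nonempty_edges e₁ h₁))
      (Finset.card_pos.mpr (H₂.nonempty_edges e₂ h₂))

/-- The maximal-rank-preserving direct product `H₁ ×̂ H₂`. -/
def maxDirProd (H₁ : FinHypergraph V₁) (H₂ : FinHypergraph V₂) : FinHypergraph (V₁ × V₂) where
  edges := {E | ∃ e₁ ∈ H₁.edges, ∃ e₂ ∈ H₂.edges,
    E ⊆ e₁ ×ˢ e₂ ∧ E.card = max e₁.card e₂.card ∧
      E.image Prod.fst = e₁ ∧ E.image Prod.snd = e₂}
  nonempty_edges := by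
    rintro E ⟨e₁, h₁, e₂, h₂, -, hc, -, -⟩
    rw [← Finset.card_pos, hc]
    exact lt_max_iff.mpr (Or.inl (Finset.card_pos.mpr (H₁.nonempty_edges e₁ h₁)))

/-- The non-rank-preserving direct product `H₁ ×̃ H₂`. -/
def nrDirProd (H₁ : FinHypergraph V₁) (H₂ : FinHypergraph V₂) : FinHypergraph (V₁ × V₂) where
  edges := {E | ∃ e ∈ H₁.edges, ∃ f ∈ H₂.edges, ∃ x ∈ e, ∃ y ∈ f,
    E = insert (x, y) ((e.erase x) ×ˢ (f.erase y))}
  nonempty_edges := by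
    rintro E ⟨e, -, f, -, x, -, y, -, rfl⟩
    exact Finset.insert_nonempty _ _

/-- The normal product `H₁ ⊠̌ H₂`: union of the Cartesian product edges and the
minimal-rank-preserving direct product edges. -/
def normalProd (H₁ : FinHypergraph V₁) (H₂ : FinHypergraph V₂) : FinHypergraph (V₁ × V₂) where
  edges := (H₁.cartProd H₂).edges ∪ (H₁.minDirProd H₂).edges
  nonempty_edges := by
    rintro E (h | h)
    · exact (H₁.cartProd H₂).nonempty_edges E h
    · exact (H₁.minDirProd H₂).nonempty_edges E h

/-- The strong product `H₁ ⊠̂ H₂`: union of the Cartesian product edges and the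
maximal-rank-preserving direct product edges. -/
def strongProd (H₁ : FinHypergraph V₁) (H₂ : FinHypergraph V₂) : FinHypergraph (V₁ × V₂) where
  edges := (H₁.cartProd H₂).edges ∪ (H₁.maxDirProd H₂).edges
  nonempty_edges := by
    rintro E (h | h)
    · exact (H₁.cartProd H₂).nonempty_edges E h
    · exact (H₁.maxDirProd H₂).nonempty_edges E h

/-- The lexicographic product `H₁ ∘ H₂`. -/
def lexProd (H₁ : FinHypergraph V₁) (H₂ : FinHypergraph V₂) : FinHypergraph (V₁ × V₂) where
  edges := {E | (E.image Prod.fst ∈ H₁.edges ∧ (E.image Prod.fst).card = E.card) ∨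
    ∃ x, ∃ e₂ ∈ H₂.edges, E = {x} ×ˢ e₂}
  nonempty_edges := by
    rintro E (⟨h₁, hc⟩ | ⟨x, e₂, h₂, rfl⟩)
    · rw [← Finset.card_pos, ← hc]
      exact Finset.card_pos.mpr (H₁.nonempty_edges _ h₁)
    · exact (Finset.singleton_nonempty x).product (H₂.nonempty_edges e₂ h₂)

end Products

/-- The square product `H₁ ■ H₂`. -/
def squareProd (H₁ : FinHypergraph V₁) (H₂ : FinHypergraph V₂) : FinHypergraph (V₁ × V₂) where
  edges := {E | ∃ e₁ ∈ H₁.edges, ∃ e₂ ∈ H₂.edges, E = e₁ ×ˢ e₂}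
  nonempty_edges := by
    rintro E ⟨e₁, h₁, e₂, h₂, rfl⟩
    exact (H₁.nonempty_edges e₁ h₁).product (H₂.nonempty_edges e₂ h₂)

/-- The 2-section of a hypergraph: distinct vertices are adjacent iff they lie
in a common edge. -/
def twoSection (H : FinHypergraph V) : SimpleGraph V where
  Adj x y := x ≠ y ∧ ∃ e ∈ H.edges, x ∈ e ∧ y ∈ e
  symm := by constructor; rintro x y ⟨hxy, e, he, hx, hy⟩; exact ⟨hxy.symm, e, he, hy, hx⟩
  loopless := by constructor; rintro x ⟨hx, -⟩; exact hx rfl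

end FinHypergraph

namespace SimpleGraph

variable {V₁ V₂ : Type*}

/-- The direct (tensor) product of simple graphs. -/
def directProd (G₁ : SimpleGraph V₁) (G₂ : SimpleGraph V₂) : SimpleGraph (V₁ × V₂) where
  Adj x y := G₁.Adj x.1 y.1 ∧ G₂.Adj x.2 y.2
  symm := ⟨fun _ _ ⟨h₁, h₂⟩ => ⟨h₁.symm, h₂.symm⟩⟩
  loopless := ⟨fun x h => G₁.irrefl h.1⟩

/-- The strong product of simple graphs. -/
def strongGraphProd (G₁ : SimpleGraph V₁) (G₂ : SimpleGraph V₂) : SimpleGraph (V₁ × V₂) where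
  Adj x y := x ≠ y ∧ ((x.1 = y.1 ∧ G₂.Adj x.2 y.2) ∨ (x.2 = y.2 ∧ G₁.Adj x.1 y.1) ∨
    (G₁.Adj x.1 y.1 ∧ G₂.Adj x.2 y.2))
  symm := by
    constructor
    rintro x y ⟨hne, (⟨h, h'⟩ | ⟨h, h'⟩ | ⟨h, h'⟩)⟩
    · exact ⟨hne.symm, Or.inl ⟨h.symm, h'.symm⟩⟩
    · exact ⟨hne.symm, Or.inr (Or.inl ⟨h.symm, h'.symm⟩)⟩
    · exact ⟨hne.symm, Or.inr (Or.inr ⟨h.symm, h'.symm⟩)⟩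
  loopless := by constructor; rintro x ⟨hx, -⟩; exact hx rfl

/-- The lexicographic product of simple graphs. -/
def lexGraphProd (G₁ : SimpleGraph V₁) (G₂ : SimpleGraph V₂) : SimpleGraph (V₁ × V₂) where
  Adj x y := G₁.Adj x.1 y.1 ∨ (x.1 = y.1 ∧ G₂.Adj x.2 y.2)
  symm := by
    constructor
    rintro x y (h | ⟨h, h'⟩)
    · exact Or.inl h.symm
    · exact Or.inr ⟨h.symm, h'.symm⟩
  loopless := by
    constructor
    rintro x (h | ⟨-, h⟩)
    · exact G₁.irrefl h
    · exact G₂.irrefl h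

end SimpleGraph

/-- the maximal-rank-preserving direct product of simple hypergraphs is simple. -/
theorem simple_maxDirProd {V₁ V₂ : Type*} [Fintype V₁] [Nonempty V₁] [DecidableEq V₁]
    [Fintype V₂] [Nonempty V₂] [DecidableEq V₂] (H₁ : FinHypergraph V₁) (H₂ : FinHypergraph V₂)
    (h₁ : H₁.Simple) (h₂ : H₂.Simple) :
    (H₁.maxDirProd H₂).Simple := by
  constructor
  · rintro E ⟨e₁, he₁, e₂, he₂, -, hc, -, -⟩
    rw [hc]
    exact le_max_of_le_left (h₁.1 e₁ he₁)
  · rintro E ⟨e₁, he₁, e₂, he₂, hEsub, hcE, hE1, hE2⟩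
      F ⟨f₁, hf₁, f₂, hf₂, hFsub, hcF, hF1, hF2⟩ hEF
    have h1 : e₁ = f₁ := h₁.2 e₁ he₁ f₁ hf₁ (hE1 ▸ hF1 ▸ Finset.image_subset_image hEF)
    have h2 : e₂ = f₂ := h₂.2 e₂ he₂ f₂ hf₂ (hE2 ▸ hF2 ▸ Finset.image_subset_image hEF)
    exact Finset.eq_of_subset_of_card_le hEF (by rw [hcE, hcF, h1, h2])
end

section
/- Let H and H' be finite hypergraphs each having at least one edge. Then the covering number of their square product satisfies τ(H■H') ≥ τ(H) + τ(H') − 1. -/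
/-- the covering number of the square product satisfies
`τ(H ■ H') ≥ τ(H) + τ(H') - 1` when both factors have at least one edge. -/
theorem coverNumber_squareProd_ge {V₁ V₂ : Type*} [Fintype V₁] [Nonempty V₁]
    [Fintype V₂] [Nonempty V₂] (H₁ : FinHypergraph V₁) (H₂ : FinHypergraph V₂)
    (h₁ : H₁.edges.Nonempty) (h₂ : H₂.edges.Nonempty) :
    (H₁.coverNumber : ℤ) + (H₂.coverNumber : ℤ) - 1 ≤
      ((H₁.squareProd H₂).coverNumber : ℤ) := by
  classical
  have hSne : {k : ℕ | ∃ T : Finset (V₁ × V₂), T.card = k ∧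
      ∀ e ∈ (H₁.squareProd H₂).edges, ∃ v ∈ T, v ∈ e}.Nonempty := by
    refine ⟨(Finset.univ : Finset (V₁ × V₂)).card, Finset.univ, rfl, ?_⟩
    intro e he
    obtain ⟨v, hv⟩ := (H₁.squareProd H₂).nonempty_edges e he
    exact ⟨v, Finset.mem_univ v, hv⟩
  obtain ⟨T, hTcard, hTcov⟩ : ∃ T : Finset (V₁ × V₂),
      T.card = (H₁.squareProd H₂).coverNumber ∧
      ∀ e ∈ (H₁.squareProd H₂).edges, ∃ v ∈ T, v ∈ e := Nat.sInf_mem hSne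
  set m : Finset V₁ → ℕ := fun e => (T.filter (fun p => p.1 ∈ e)).card with hmdef
  obtain ⟨e₀, he₀, he₀min⟩ : ∃ e₀ ∈ H₁.edges, ∀ e ∈ H₁.edges, m e₀ ≤ m e := by
    obtain ⟨e₀, he₀, he₀v⟩ := Nat.sInf_mem (h₁.image m)
    exact ⟨e₀, he₀, fun e he => he₀v ▸ Nat.sInf_le ⟨e, he, rfl⟩⟩
  set Q := (T.filter fun p => ¬ p.1 ∈ e₀).image Prod.fst with hQdef
  have hτ₂ : H₂.coverNumber ≤ m e₀ := by
    have hP : ∀ e ∈ H₂.edges, ∃ v ∈ (T.filter fun p => p.1 ∈ e₀).image Prod.snd, v ∈ e := by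
      intro e he
      obtain ⟨v, hvT, hv⟩ := hTcov (e₀ ×ˢ e) ⟨e₀, he₀, e, he, rfl⟩
      rw [Finset.mem_product] at hv
      exact ⟨v.2, Finset.mem_image.mpr ⟨v, Finset.mem_filter.mpr ⟨hvT, hv.1⟩, rfl⟩, hv.2⟩
    calc H₂.coverNumber ≤ ((T.filter fun p => p.1 ∈ e₀).image Prod.snd).card :=
          Nat.sInf_le ⟨_, rfl, hP⟩
      _ ≤ m e₀ := Finset.card_image_le
  have hτ₁ : H₁.coverNumber ≤ Q.card + 1 := by
    by_contra hcon
    push_neg at hcon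
    have key : ∀ x ∈ e₀, ∀ p ∈ T, p.1 ≠ x := by
      intro x hx p hpT hpx
      have hnc : ¬ ∀ e ∈ H₁.edges, ∃ v ∈ insert x Q, v ∈ e := by
        intro hcov'
        have h1 : H₁.coverNumber ≤ (insert x Q).card :=
          Nat.sInf_le ⟨insert x Q, rfl, hcov'⟩
        have h2 := Finset.card_insert_le x Q
        omega
      push_neg at hnc
      obtain ⟨e, he, hemiss⟩ := hnc
      have hsub : T.filter (fun p => p.1 ∈ e) ⊆
          T.filter (fun p => p.1 ∈ e₀ ∧ p.1 ≠ x) := by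
        intro q hq
        rw [Finset.mem_filter] at hq ⊢
        refine ⟨hq.1, ?_, ?_⟩
        · by_contra hq1
          exact hemiss q.1 (Finset.mem_insert_of_mem
            (Finset.mem_image.mpr ⟨q, Finset.mem_filter.mpr ⟨hq.1, hq1⟩, rfl⟩)) hq.2
        · intro h
          exact hemiss x (Finset.mem_insert_self x Q) (h ▸ hq.2)
      have hsub2 : T.filter (fun p => p.1 ∈ e₀ ∧ p.1 ≠ x) ⊆
          T.filter (fun p => p.1 ∈ e₀) := by
        intro q hq
        rw [Finset.mem_filter] at hq ⊢
        exact ⟨hq.1, hq.2.1⟩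
      have hcardle : (T.filter (fun p => p.1 ∈ e₀)).card ≤
          (T.filter (fun p => p.1 ∈ e₀ ∧ p.1 ≠ x)).card :=
        le_trans (he₀min e he) (Finset.card_le_card hsub)
      have heq : T.filter (fun p => p.1 ∈ e₀ ∧ p.1 ≠ x) =
          T.filter (fun p => p.1 ∈ e₀) :=
        Finset.eq_of_subset_of_card_le hsub2 hcardle
      have hpmem : p ∈ T.filter (fun p => p.1 ∈ e₀) :=
        Finset.mem_filter.mpr ⟨hpT, hpx ▸ hx⟩
      rw [← heq, Finset.mem_filter] at hpmem
      exact hpmem.2.2 hpx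
    obtain ⟨f, hf⟩ := h₂
    obtain ⟨v, hvT, hv⟩ := hTcov (e₀ ×ˢ f) ⟨e₀, he₀, f, hf, rfl⟩
    rw [Finset.mem_product] at hv
    exact key v.1 hv.1 v hvT rfl
  have hsplit : m e₀ + (T.filter fun p => ¬ p.1 ∈ e₀).card = T.card :=
    Finset.card_filter_add_card_filter_not _
  have hQle : Q.card ≤ (T.filter fun p => ¬ p.1 ∈ e₀).card := Finset.card_image_le
  have : H₁.coverNumber + H₂.coverNumber ≤ T.card + 1 := by omega
  rw [hTcard] at this

  omega
end
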